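/- Let q ≥ 2 be even, let (P, L) be a finite projective plane of order q, and let O ⊆ P be an oval. Then there exists a point N ∈ P (the nucleus) such that N ∉ O and every tangent line of O contains N; that is, all q+1 tangent lines of O are concurrent. -/
import Mathlib


/-- A finite projective plane of order `q`, given by its set of lines (each line a
finite set of points of the ambient point type `P`): any two distinct points lie on
exactly one common line, any two distinct lines meet in exactly one point, there are
four points no three of which are collinear, and every line has `q + 1` points. -/
structure IsProjectivePlane (q : ℕ) {P : Type} [DecidableEq P] (L : Finset (Finset P)) : Prop where
  exists_unique_line : ∀ p₁ p₂ : P, p₁ ≠ p₂ → ∃! ℓ, ℓ ∈ L ∧ p₁ ∈ ℓ ∧ p₂ ∈ ℓ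
  exists_unique_point : ∀ ℓ₁ ∈ L, ∀ ℓ₂ ∈ L, ℓ₁ ≠ ℓ₂ → ∃! p, p ∈ ℓ₁ ∧ p ∈ ℓ₂
  nondeg : ∃ a b c d : P, a ≠ b ∧ a ≠ c ∧ a ≠ d ∧ b ≠ c ∧ b ≠ d ∧ c ≠ d ∧
      ∀ ℓ ∈ L, (ℓ ∩ ({a, b, c, d} : Finset P)).card ≤ 2
  card_line : ∀ ℓ ∈ L, ℓ.card = q + 1

/-- An oval: a set of `q + 1` points such that every line contains at most two of them. -/
def IsOval (q : ℕ) {P : Type} [DecidableEq P] (L : Finset (Finset P)) (O : Finset P) : Prop :=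
  O.card = q + 1 ∧ ∀ ℓ ∈ L, (ℓ ∩ O).card ≤ 2

/-- A projective bundle: a set of `q² + q + 1` ovals, any two of which meet in
exactly one point. -/
def IsProjectiveBundle (q : ℕ) {P : Type} [DecidableEq P] (L : Finset (Finset P))
    (B : Finset (Finset P)) : Prop :=
  B.card = q ^ 2 + q + 1 ∧ (∀ o ∈ B, IsOval q L o) ∧
    ∀ o₁ ∈ B, ∀ o₂ ∈ B, o₁ ≠ o₂ → (o₁ ∩ o₂).card = 1

section Helpers

variable {q : ℕ} {P : Type} [DecidableEq P] {L : Finset (Finset P)} {O : Finset P}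

lemma line_eq' (hL : IsProjectivePlane q L) {ℓ ℓ' : Finset P} (h1 : ℓ ∈ L) (h2 : ℓ' ∈ L)
    {a b : P} (hab : a ≠ b) (ha : a ∈ ℓ) (hb : b ∈ ℓ) (ha' : a ∈ ℓ') (hb' : b ∈ ℓ') :
    ℓ = ℓ' := by
  obtain ⟨m, -, hu⟩ := hL.exists_unique_line a b hab
  rw [hu ℓ ⟨h1, ha, hb⟩, hu ℓ' ⟨h2, ha', hb'⟩]

lemma point_eq' (hL : IsProjectivePlane q L) {ℓ ℓ' : Finset P} (h1 : ℓ ∈ L) (h2 : ℓ' ∈ L)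
    (hne : ℓ ≠ ℓ') {x y : P} (hx : x ∈ ℓ) (hx' : x ∈ ℓ') (hy : y ∈ ℓ) (hy' : y ∈ ℓ') :
    x = y := by
  obtain ⟨z, -, hu⟩ := hL.exists_unique_point ℓ h1 ℓ' h2 hne
  rw [hu x ⟨hx, hx'⟩, hu y ⟨hy, hy'⟩]

lemma exists_line_avoid (hL : IsProjectivePlane q L) (p : P) : ∃ ℓ ∈ L, p ∉ ℓ := by
  obtain ⟨a, b, c, d, hab, hac, had, hbc, hbd, hcd, hgen⟩ := hL.nondeg
  obtain ⟨ℓ1, hℓ1, ha1, hb1⟩ := (hL.exists_unique_line a b hab).exists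
  obtain ⟨ℓ2, hℓ2, hc2, hd2⟩ := (hL.exists_unique_line c d hcd).exists
  obtain ⟨ℓ3, hℓ3, ha3, hc3⟩ := (hL.exists_unique_line a c hac).exists
  by_cases hp1 : p ∈ ℓ1
  · by_cases hp2 : p ∈ ℓ2
    · refine ⟨ℓ3, hℓ3, fun hp3 => ?_⟩
      by_cases hpa : p = a
      · have ha2 : a ∈ ℓ2 := hpa ▸ hp2
        have hsub : ({a, c, d} : Finset P) ⊆ ℓ2 ∩ {a, b, c, d} := by
          intro y hy
          simp only [Finset.mem_insert, Finset.mem_singleton] at hy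
          rcases hy with rfl | rfl | rfl <;> simp [ha2, hc2, hd2]
        have h3 : ({a, c, d} : Finset P).card = 3 := by
          rw [Finset.card_insert_of_notMem (by simp [hac, had]),
            Finset.card_insert_of_notMem (by simp [hcd]), Finset.card_singleton]
        have := (Finset.card_le_card hsub).trans (hgen ℓ2 hℓ2)
        omega
      · have heq : ℓ1 = ℓ3 := line_eq' hL hℓ1 hℓ3 hpa hp1 ha1 hp3 ha3
        have hc1 : c ∈ ℓ1 := heq ▸ hc3
        have hsub : ({a, b, c} : Finset P) ⊆ ℓ1 ∩ {a, b, c, d} := by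
          intro y hy
          simp only [Finset.mem_insert, Finset.mem_singleton] at hy
          rcases hy with rfl | rfl | rfl <;> simp [ha1, hb1, hc1]
        have h3 : ({a, b, c} : Finset P).card = 3 := by
          rw [Finset.card_insert_of_notMem (by simp [hab, hac]),
            Finset.card_insert_of_notMem (by simp [hbc]), Finset.card_singleton]
        have := (Finset.card_le_card hsub).trans (hgen ℓ1 hℓ1)
        omega
    · exact ⟨ℓ2, hℓ2, hp2⟩
  · exact ⟨ℓ1, hℓ1, hp1⟩

lemma card_lines_through (hL : IsProjectivePlane q L) (p : P) :
    (L.filter (fun ℓ => p ∈ ℓ)).card = q + 1 := by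
  obtain ⟨ℓ0, hℓ0, hp0⟩ := exists_line_avoid hL p
  have hnep : ∀ x ∈ ℓ0, p ≠ x := fun x hx h => hp0 (by rw [h]; exact hx)
  rw [← hL.card_line ℓ0 hℓ0]
  symm
  apply Finset.card_bij (fun x hx => ((hL.exists_unique_line p x (hnep x hx)).exists).choose)
  · intro x hx
    obtain ⟨hm, hpm, hxm⟩ := ((hL.exists_unique_line p x (hnep x hx)).exists).choose_spec
    exact Finset.mem_filter.mpr ⟨hm, hpm⟩
  · intro x hx y hy heq
    obtain ⟨hm, hpm, hxm⟩ := ((hL.exists_unique_line p x (hnep x hx)).exists).choose_spec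
    obtain ⟨hm', hpm', hym⟩ := ((hL.exists_unique_line p y (hnep y hy)).exists).choose_spec
    rw [heq] at hxm
    exact point_eq' hL hm' hℓ0 (fun h => hp0 (by rw [← h]; exact hpm')) hxm hx hym hy
  · intro ℓ hℓ
    obtain ⟨hℓL, hpℓ⟩ := Finset.mem_filter.mp hℓ
    have hne : ℓ ≠ ℓ0 := fun h => hp0 (by rw [← h]; exact hpℓ)
    obtain ⟨x, hxℓ, hxℓ0⟩ := (hL.exists_unique_point ℓ hℓL ℓ0 hℓ0 hne).exists
    refine ⟨x, hxℓ0, ?_⟩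
    obtain ⟨hm, hpm, hxm⟩ := ((hL.exists_unique_line p x (hnep x hxℓ0)).exists).choose_spec
    exact line_eq' hL hm hℓL (hnep x hxℓ0) hpm hxm hpℓ hxℓ

lemma sum_lines_through (hL : IsProjectivePlane q L) (O : Finset P) (x : P) :
    ∑ ℓ ∈ L.filter (fun ℓ => x ∈ ℓ), ((ℓ ∩ O).erase x).card = (O.erase x).card := by
  have hdisj : ∀ ℓ ∈ L.filter (fun ℓ => x ∈ ℓ), ∀ ℓ' ∈ L.filter (fun ℓ => x ∈ ℓ),
      ℓ ≠ ℓ' → Disjoint ((ℓ ∩ O).erase x) ((ℓ' ∩ O).erase x) := by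
    intro ℓ hℓ ℓ' hℓ' hne
    obtain ⟨hℓL, hxℓ⟩ := Finset.mem_filter.mp hℓ
    obtain ⟨hℓL', hxℓ'⟩ := Finset.mem_filter.mp hℓ'
    rw [Finset.disjoint_left]
    intro y hy hy'
    obtain ⟨hyx, hyℓ, hyO⟩ := Finset.mem_erase.mp hy |>.imp id (fun h => Finset.mem_inter.mp h)
    obtain ⟨hyx', hyℓ', hyO'⟩ := Finset.mem_erase.mp hy' |>.imp id (fun h => Finset.mem_inter.mp h)
    exact hne (line_eq' hL hℓL hℓL' (Ne.symm hyx) hxℓ hyℓ hxℓ' hyℓ')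
  rw [← Finset.card_biUnion hdisj]
  congr 1
  ext y
  simp only [Finset.mem_biUnion, Finset.mem_filter, Finset.mem_erase, Finset.mem_inter]
  constructor
  · rintro ⟨ℓ, ⟨hℓ, hx⟩, hyx, hyℓ, hyO⟩
    exact ⟨hyx, hyO⟩
  · rintro ⟨hyx, hyO⟩
    obtain ⟨ℓ, ⟨hℓ, hxℓ, hyℓ⟩, -⟩ := hL.exists_unique_line x y (Ne.symm hyx)
    exact ⟨ℓ, ⟨hℓ, hxℓ⟩, hyx, hyℓ, hyO⟩

/-- Through each point of the oval there is exactly one tangent line. -/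
lemma tangent_card_one (hL : IsProjectivePlane q L) (hO : IsOval q L O) {p : P} (hp : p ∈ O) :
    (L.filter (fun ℓ => p ∈ ℓ ∧ (ℓ ∩ O).card = 1)).card = 1 := by
  set s := L.filter (fun ℓ => p ∈ ℓ) with hs
  have hsum : ∑ ℓ ∈ s, ((ℓ ∩ O).erase p).card = q := by
    rw [sum_lines_through hL O p, Finset.card_erase_of_mem hp, hO.1]
    omega
  have hcard : s.card = q + 1 := card_lines_through hL p
  have hval : ∀ ℓ ∈ s, ((ℓ ∩ O).erase p).card = (ℓ ∩ O).card - 1 := by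
    intro ℓ hℓ
    obtain ⟨hℓL, hpℓ⟩ := Finset.mem_filter.mp hℓ
    rw [Finset.card_erase_of_mem (Finset.mem_inter.mpr ⟨hpℓ, hp⟩)]
  have hmem : ∀ ℓ ∈ s, 1 ≤ (ℓ ∩ O).card ∧ (ℓ ∩ O).card ≤ 2 := by
    intro ℓ hℓ
    obtain ⟨hℓL, hpℓ⟩ := Finset.mem_filter.mp hℓ
    exact ⟨Finset.card_pos.mpr ⟨p, Finset.mem_inter.mpr ⟨hpℓ, hp⟩⟩, hO.2 ℓ hℓL⟩
  set Q : Finset P → Prop := fun ℓ => (ℓ ∩ O).card = 1 with hQ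
  have hsplit : ∑ ℓ ∈ s.filter Q, ((ℓ ∩ O).erase p).card
      + ∑ ℓ ∈ s.filter (fun ℓ => ¬ Q ℓ), ((ℓ ∩ O).erase p).card = q := by
    rw [Finset.sum_filter_add_sum_filter_not]; exact hsum
  have h0 : ∑ ℓ ∈ s.filter Q, ((ℓ ∩ O).erase p).card = 0 := by
    apply Finset.sum_eq_zero
    intro ℓ hℓ
    obtain ⟨hℓs, hQℓ⟩ := Finset.mem_filter.mp hℓ
    rw [hval ℓ hℓs, hQℓ]
    omega
  have h1 : ∑ ℓ ∈ s.filter (fun ℓ => ¬ Q ℓ), ((ℓ ∩ O).erase p).card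
      = (s.filter (fun ℓ => ¬ Q ℓ)).card := by
    rw [Finset.card_eq_sum_ones]
    apply Finset.sum_congr rfl
    intro ℓ hℓ
    obtain ⟨hℓs, hQℓ⟩ := Finset.mem_filter.mp hℓ
    have := hmem ℓ hℓs
    rw [hval ℓ hℓs]
    simp only [hQ] at hQℓ
    omega
  have hcards : (s.filter Q).card + (s.filter (fun ℓ => ¬ Q ℓ)).card = q + 1 := by
    rw [Finset.card_filter_add_card_filter_not, hcard]
  have hgoal : (s.filter Q).card = 1 := by omega
  have heq : L.filter (fun ℓ => p ∈ ℓ ∧ (ℓ ∩ O).card = 1) = s.filter Q := by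
    rw [hs, Finset.filter_filter]
  rw [heq]
  exact hgoal

lemma exists_unique_tangent (hL : IsProjectivePlane q L) (hO : IsOval q L O) {p : P}
    (hp : p ∈ O) : ∃! t, t ∈ L ∧ p ∈ t ∧ (t ∩ O).card = 1 := by
  obtain ⟨t0, ht0⟩ := Finset.card_eq_one.mp (tangent_card_one hL hO hp)
  have hmem : t0 ∈ L.filter (fun ℓ => p ∈ ℓ ∧ (ℓ ∩ O).card = 1) := ht0 ▸ Finset.mem_singleton_self t0
  obtain ⟨h1, h2, h3⟩ := Finset.mem_filter.mp hmem
  refine ⟨t0, ⟨h1, h2, h3⟩, fun t ht => ?_⟩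
  have : t ∈ L.filter (fun ℓ => p ∈ ℓ ∧ (ℓ ∩ O).card = 1) :=
    Finset.mem_filter.mpr ⟨ht.1, ht.2.1, ht.2.2⟩
  rw [ht0] at this
  exact Finset.mem_singleton.mp this

/-- Through each point off the oval there is an odd number of tangent lines. -/
lemma odd_tangents (hL : IsProjectivePlane q L) (hO : IsOval q L O) (heven : Even q)
    {x : P} (hx : x ∉ O) :
    Odd ((L.filter (fun ℓ => x ∈ ℓ ∧ (ℓ ∩ O).card = 1)).card) := by
  set s := L.filter (fun ℓ => x ∈ ℓ) with hs
  have hsum : ∑ ℓ ∈ s, (ℓ ∩ O).card = q + 1 := by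
    have := sum_lines_through hL O x
    rw [Finset.erase_eq_of_notMem hx] at this
    rw [← hO.1, ← this]
    apply Finset.sum_congr rfl
    intro ℓ hℓ
    rw [Finset.erase_eq_of_notMem (fun h => hx (Finset.mem_inter.mp h).2)]
  set Q : Finset P → Prop := fun ℓ => (ℓ ∩ O).card = 1 with hQ
  have hsplit : ∑ ℓ ∈ s.filter Q, (ℓ ∩ O).card
      + ∑ ℓ ∈ s.filter (fun ℓ => ¬ Q ℓ), (ℓ ∩ O).card = q + 1 := by
    rw [Finset.sum_filter_add_sum_filter_not]; exact hsum
  have h1 : ∑ ℓ ∈ s.filter Q, (ℓ ∩ O).card = (s.filter Q).card := by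
    rw [Finset.card_eq_sum_ones]
    exact Finset.sum_congr rfl fun ℓ hℓ => (Finset.mem_filter.mp hℓ).2
  have h2 : 2 ∣ ∑ ℓ ∈ s.filter (fun ℓ => ¬ Q ℓ), (ℓ ∩ O).card := by
    apply Finset.dvd_sum
    intro ℓ hℓ
    obtain ⟨hℓs, hQℓ⟩ := Finset.mem_filter.mp hℓ
    have hle := hO.2 ℓ (Finset.mem_filter.mp hℓs).1
    simp only [hQ] at hQℓ
    interval_cases h : (ℓ ∩ O).card <;> omega
  obtain ⟨k, hk⟩ := h2
  obtain ⟨m, hm⟩ := heven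
  have : (s.filter Q).card = q + 1 - 2 * k := by omega
  have hodd : Odd ((s.filter Q).card) := by
    refine ⟨m - k, by omega⟩
  have : L.filter (fun ℓ => x ∈ ℓ ∧ (ℓ ∩ O).card = 1) = s.filter Q := by
    rw [hs, Finset.filter_filter]
  rw [this]
  exact hodd


/-- A point off the oval lying on a secant line lies on at most one tangent line. -/
lemma secant_tangent_unique (hL : IsProjectivePlane q L) (hO : IsOval q L O) (hq : 2 ≤ q)
    (heven : Even q) {ℓ : Finset P} (hℓ : ℓ ∈ L) (hsec : (ℓ ∩ O).card = 2)
    {x : P} (hx : x ∈ ℓ) (hxO : x ∉ O)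
    {t₁ t₂ : Finset P} (ht₁ : t₁ ∈ L) (ht₂ : t₂ ∈ L) (hT₁ : (t₁ ∩ O).card = 1)
    (hT₂ : (t₂ ∩ O).card = 1) (hx₁ : x ∈ t₁) (hx₂ : x ∈ t₂) : t₁ = t₂ := by
  by_contra hne
  set S : Finset P := ℓ \ O with hS
  have hxS : x ∈ S := Finset.mem_sdiff.mpr ⟨hx, hxO⟩
  have hScard : S.card = q - 1 := by
    have h1 : ℓ \ O = ℓ \ (ℓ ∩ O) := by rw [Finset.sdiff_inter_self_left]
    rw [hS, h1, Finset.card_sdiff_of_subset Finset.inter_subset_left, hsec, hL.card_line ℓ hℓ]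
    omega
  set TL : Finset (Finset P) := L.filter (fun t => (t ∩ O).card = 1) with hTL
  -- the double count
  have hdouble : ∑ s ∈ S, (L.filter (fun t => s ∈ t ∧ (t ∩ O).card = 1)).card
      = ∑ t ∈ TL, (S.filter (fun s => s ∈ t)).card := by
    have h1 : ∀ s : P, L.filter (fun t => s ∈ t ∧ (t ∩ O).card = 1)
        = TL.filter (fun t => s ∈ t) := by
      intro s
      rw [hTL, Finset.filter_filter]
      apply Finset.filter_congr
      intro t ht
      exact and_comm
    simp only [h1, Finset.card_filter]
    rw [Finset.sum_comm]
  -- evaluate the right-hand side: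
  have hval : ∀ t ∈ TL, (S.filter (fun s => s ∈ t)).card
      = if Disjoint (t ∩ O) ℓ then 1 else 0 := by
    intro t ht
    obtain ⟨htL, htO⟩ := Finset.mem_filter.mp ht
    obtain ⟨p, hp⟩ := Finset.card_eq_one.mp htO
    have hpt : p ∈ t := (Finset.mem_inter.mp (hp ▸ Finset.mem_singleton_self p)).1
    have hpO : p ∈ O := (Finset.mem_inter.mp (hp ▸ Finset.mem_singleton_self p)).2
    have hnetℓ : t ≠ ℓ := fun h => by rw [h, hsec] at htO; omega
    obtain ⟨y, ⟨hyt, hyℓ⟩, hyu⟩ := hL.exists_unique_point t htL ℓ hℓ hnetℓ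
    by_cases hpℓ : p ∈ ℓ
    · -- tangent touching on ℓ : no point of S on it
      rw [if_neg (by rw [hp]; exact Finset.not_disjoint_iff.mpr ⟨p, Finset.mem_singleton_self p, hpℓ⟩)]
      rw [Finset.card_eq_zero, Finset.filter_eq_empty_iff]
      intro s hsS hst
      obtain ⟨hsℓ, hsO⟩ := Finset.mem_sdiff.mp hsS
      have : s = p := by
        have h1 : s = y := hyu s ⟨hst, hsℓ⟩
        have h2 : p = y := hyu p ⟨hpt, hpℓ⟩
        rw [h1, h2]
      exact hsO (this ▸ hpO)
    · rw [if_pos (by rw [hp]; exact Finset.disjoint_singleton_left.mpr hpℓ)]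
      rw [Finset.card_eq_one]
      refine ⟨y, ?_⟩
      have hyO : y ∉ O := by
        intro hyO
        have : y ∈ t ∩ O := Finset.mem_inter.mpr ⟨hyt, hyO⟩
        rw [hp, Finset.mem_singleton] at this
        exact hpℓ (this ▸ hyℓ)
      ext s
      simp only [Finset.mem_filter, Finset.mem_singleton]
      constructor
      · rintro ⟨hsS, hst⟩
        exact hyu s ⟨hst, (Finset.mem_sdiff.mp hsS).1⟩
      · rintro rfl
        exact ⟨Finset.mem_sdiff.mpr ⟨hyℓ, hyO⟩, hyt⟩
  have hrhs : ∑ t ∈ TL, (S.filter (fun s => s ∈ t)).card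
      = (TL.filter (fun t => Disjoint (t ∩ O) ℓ)).card := by
    rw [Finset.sum_congr rfl hval, ← Finset.card_filter]
  -- the tangents touching off ℓ biject with the oval points off ℓ
  have hcardTL : (TL.filter (fun t => Disjoint (t ∩ O) ℓ)).card = (O \ ℓ).card := by
    symm
    have hmemO : ∀ p ∈ O \ ℓ, p ∈ O := fun p hp => (Finset.mem_sdiff.mp hp).1
    apply Finset.card_bij (fun p hp => ((exists_unique_tangent hL hO (hmemO p hp)).exists).choose)
    · intro p hp
      obtain ⟨h1, h2, h3⟩ := ((exists_unique_tangent hL hO (hmemO p hp)).exists).choose_spec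
      refine Finset.mem_filter.mpr ⟨Finset.mem_filter.mpr ⟨h1, h3⟩, ?_⟩
      have : ((exists_unique_tangent hL hO (hmemO p hp)).exists).choose ∩ O = {p} := by
        obtain ⟨a, ha⟩ := Finset.card_eq_one.mp h3
        have hpa : p ∈ ({a} : Finset P) := ha ▸ Finset.mem_inter.mpr ⟨h2, hmemO p hp⟩
        rw [ha, Finset.mem_singleton.mp hpa]
      rw [this]
      exact Finset.disjoint_singleton_left.mpr (Finset.mem_sdiff.mp hp).2
    · intro p hp p' hp' heq
      obtain ⟨h1, h2, h3⟩ := ((exists_unique_tangent hL hO (hmemO p hp)).exists).choose_spec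
      obtain ⟨h1', h2', h3'⟩ := ((exists_unique_tangent hL hO (hmemO p' hp')).exists).choose_spec
      rw [heq] at h2 h3
      obtain ⟨a, ha⟩ := Finset.card_eq_one.mp h3
      have hpa : p ∈ ({a} : Finset P) := ha ▸ Finset.mem_inter.mpr ⟨h2, hmemO p hp⟩
      have hpa' : p' ∈ ({a} : Finset P) := ha ▸ Finset.mem_inter.mpr ⟨h2', hmemO p' hp'⟩
      rw [Finset.mem_singleton.mp hpa, Finset.mem_singleton.mp hpa']
    · intro t ht
      obtain ⟨htTL, htdisj⟩ := Finset.mem_filter.mp ht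
      obtain ⟨htL, htO⟩ := Finset.mem_filter.mp htTL
      obtain ⟨p, hp⟩ := Finset.card_eq_one.mp htO
      have hpt : p ∈ t := (Finset.mem_inter.mp (hp ▸ Finset.mem_singleton_self p)).1
      have hpO : p ∈ O := (Finset.mem_inter.mp (hp ▸ Finset.mem_singleton_self p)).2
      have hpℓ : p ∉ ℓ := by
        intro hpℓ
        exact (Finset.disjoint_singleton_left.mp (hp ▸ htdisj)) hpℓ
      have hpmem : p ∈ O \ ℓ := Finset.mem_sdiff.mpr ⟨hpO, hpℓ⟩
      refine ⟨p, hpmem, ?_⟩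
      obtain ⟨h1, h2, h3⟩ := ((exists_unique_tangent hL hO (hmemO p hpmem)).exists).choose_spec
      obtain ⟨t0, ht0, hu⟩ := exists_unique_tangent hL hO hpO
      rw [hu _ ⟨h1, h2, h3⟩, hu t ⟨htL, hpt, htO⟩]
  have hOℓ : (O \ ℓ).card = q - 1 := by
    have h1 : O \ ℓ = O \ (ℓ ∩ O) := by
      rw [Finset.inter_comm, Finset.sdiff_inter_self_left]
    rw [h1, Finset.card_sdiff_of_subset (Finset.inter_subset_right), hsec, hO.1]
    omega
  -- each point of S lies on at least one tangent, and x lies on at least two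
  have hlow : ∀ s ∈ S, 1 ≤ (L.filter (fun t => s ∈ t ∧ (t ∩ O).card = 1)).card := by
    intro s hsS
    have hsO : s ∉ O := (Finset.mem_sdiff.mp hsS).2
    obtain ⟨k, hk⟩ := odd_tangents hL hO heven hsO
    omega
  have hx2 : 2 ≤ (L.filter (fun t => x ∈ t ∧ (t ∩ O).card = 1)).card := by
    apply Finset.one_lt_card.mpr
    exact ⟨t₁, Finset.mem_filter.mpr ⟨ht₁, hx₁, hT₁⟩, t₂, Finset.mem_filter.mpr ⟨ht₂, hx₂, hT₂⟩, hne⟩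
  have hbig : ∑ s ∈ S, (L.filter (fun t => s ∈ t ∧ (t ∩ O).card = 1)).card ≥ q := by
    rw [← Finset.add_sum_erase S _ hxS]
    have h1 : ∑ s ∈ S.erase x, (L.filter (fun t => s ∈ t ∧ (t ∩ O).card = 1)).card
        ≥ (S.erase x).card := by
      rw [Finset.card_eq_sum_ones]
      exact Finset.sum_le_sum (fun s hs => hlow s (Finset.mem_of_mem_erase hs))
    have h2 : (S.erase x).card = q - 2 := by
      rw [Finset.card_erase_of_mem hxS, hScard]
      omega
    omega
  rw [hdouble, hrhs, hcardTL, hOℓ] at hbig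
  omega

end Helpers

/-- In a finite projective plane of even order `q ≥ 2`, all tangent lines of an
oval `O` are concurrent: there is a point `N ∉ O` (the nucleus) lying on every tangent line
of `O`. -/
theorem statement_6 (q : ℕ) (hq : 2 ≤ q) (heven : Even q) (P : Type) [Fintype P] [DecidableEq P]
    (L : Finset (Finset P)) (hL : IsProjectivePlane q L)
    (O : Finset P) (hO : IsOval q L O) :
    ∃ N : P, N ∉ O ∧ ∀ ℓ ∈ L, (ℓ ∩ O).card = 1 → N ∈ ℓ := by
  -- pick two distinct points of the oval
  have h2O : 1 < O.card := by rw [hO.1]; omega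
  obtain ⟨p₁, hp₁, p₂, hp₂, hp12⟩ := Finset.one_lt_card.mp h2O
  obtain ⟨t₁, ⟨ht₁L, hp₁t, hT₁⟩, -⟩ := exists_unique_tangent hL hO hp₁
  obtain ⟨t₂, ⟨ht₂L, hp₂t, hT₂⟩, -⟩ := exists_unique_tangent hL hO hp₂
  have ht1O : t₁ ∩ O = {p₁} := by
    obtain ⟨a, ha⟩ := Finset.card_eq_one.mp hT₁
    have : p₁ ∈ ({a} : Finset P) := ha ▸ Finset.mem_inter.mpr ⟨hp₁t, hp₁⟩
    rw [ha, Finset.mem_singleton.mp this]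
  have ht2O : t₂ ∩ O = {p₂} := by
    obtain ⟨a, ha⟩ := Finset.card_eq_one.mp hT₂
    have : p₂ ∈ ({a} : Finset P) := ha ▸ Finset.mem_inter.mpr ⟨hp₂t, hp₂⟩
    rw [ha, Finset.mem_singleton.mp this]
  have htne : t₁ ≠ t₂ := by
    intro h
    rw [h, ht2O] at ht1O
    exact hp12 (Finset.singleton_injective ht1O.symm)
  obtain ⟨N, hN₁, hN₂⟩ := (hL.exists_unique_point t₁ ht₁L t₂ ht₂L htne).exists
  have hNO : N ∉ O := by
    intro hNO
    have h1 : N = p₁ := Finset.mem_singleton.mp (ht1O ▸ Finset.mem_inter.mpr ⟨hN₁, hNO⟩)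
    have h2 : N = p₂ := Finset.mem_singleton.mp (ht2O ▸ Finset.mem_inter.mpr ⟨hN₂, hNO⟩)
    exact hp12 (h1 ▸ h2)
  refine ⟨N, hNO, ?_⟩
  intro t htL htT
  -- t is the tangent at its touch point p
  obtain ⟨p, hp⟩ := Finset.card_eq_one.mp htT
  have hpt : p ∈ t := (Finset.mem_inter.mp (hp ▸ Finset.mem_singleton_self p)).1
  have hpO : p ∈ O := (Finset.mem_inter.mp (hp ▸ Finset.mem_singleton_self p)).2
  have hNp : N ≠ p := fun h => hNO (h ▸ hpO)
  obtain ⟨m, ⟨hmL, hNm, hpm⟩, -⟩ := hL.exists_unique_line N p hNp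
  have hm1 : 1 ≤ (m ∩ O).card := Finset.card_pos.mpr ⟨p, Finset.mem_inter.mpr ⟨hpm, hpO⟩⟩
  have hm2 : (m ∩ O).card ≤ 2 := hO.2 m hmL
  rcases (by omega : (m ∩ O).card = 1 ∨ (m ∩ O).card = 2) with hm | hm
  · -- m is a tangent through p, hence m = t, and N ∈ m
    obtain ⟨t0, ht0, hu⟩ := exists_unique_tangent hL hO hpO
    have : m = t := by rw [hu m ⟨hmL, hpm, hm⟩, hu t ⟨htL, hpt, htT⟩]
    exact this ▸ hNm
  · -- m is a secant through N, contradicting the two tangents t₁, t₂ through N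
    exact absurd (secant_tangent_unique hL hO hq heven hmL hm hNm hNO ht₁L ht₂L hT₁ hT₂ hN₁ hN₂)
      htne
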